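/- Let X and Y be mm-spaces and ε ≥ 0. If X ≻_ε Y, then for every real number ε' > ε there exists a Borel measurable map f : supp m_X → supp m_Y that is 1-Lipschitz up to 2ε' and satisfies d_P(f_* m_X, m_Y) ≤ 2ε' (i.e. X ≻^{KY}_{2ε'} Y). -/

import Mathlib

open MeasureTheory Topology Filter Set Metric ENNReal

noncomputable section

/-- The support of a Borel measure: points all of whose open neighborhoods have
positive measure. -/
def msupport {X : Type*} [TopologicalSpace X] [MeasurableSpace X] (μ : Measure X) : Set X :=
  {x | ∀ U : Set X, IsOpen U → x ∈ U → 0 < μ U}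

/-- `dis_≻ S = sup { d_Y(y,y') − d_X(x,x') : (x,y),(x',y') ∈ S }`, with `dis_≻ ∅ = 0`. -/
def disSucc {X Y : Type*} [MetricSpace X] [MetricSpace Y] (S : Set (X × Y)) : ℝ≥0∞ :=
  ⨆ p ∈ S, ⨆ q ∈ S, ENNReal.ofReal (dist p.2 q.2 - dist p.1 q.1)

/-- `dis S = sup { |d_X(x,x') − d_Y(y,y')| : (x,y),(x',y') ∈ S }`, with `dis ∅ = 0`. -/
def disBox {X Y : Type*} [MetricSpace X] [MetricSpace Y] (S : Set (X × Y)) : ℝ≥0∞ :=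
  ⨆ p ∈ S, ⨆ q ∈ S, ENNReal.ofReal |dist p.1 q.1 - dist p.2 q.2|

/-- `π` is a coupling of `μ` and `ν`. -/
def IsCoupling {X Y : Type*} [MeasurableSpace X] [MeasurableSpace Y]
    (π : Measure (X × Y)) (μ : Measure X) (ν : Measure Y) : Prop :=
  IsProbabilityMeasure π ∧ π.map Prod.fst = μ ∧ π.map Prod.snd = ν

/-- `X ≻_ε Y`: the Lipschitz order with additive error `ε`. -/
def LipDomE {X Y : Type*} [MetricSpace X] [MetricSpace Y]
    [MeasurableSpace X] [MeasurableSpace Y]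
    (μ : Measure X) (ν : Measure Y) (ε : ℝ) : Prop :=
  ∃ π : Measure (X × Y), IsCoupling π μ ν ∧
    ∃ S : Set (X × Y), IsClosed S ∧ disSucc S ≤ ENNReal.ofReal ε ∧
      ENNReal.ofReal (1 - ε) ≤ π S

/-- `X ≻ Y`: the Lipschitz order. There is a 1-Lipschitz map
`f : supp m_X → supp m_Y` with `f_* m_X = m_Y`. -/
def LipOrder {X Y : Type*} [MetricSpace X] [MetricSpace Y]
    [MeasurableSpace X] [MeasurableSpace Y]
    (μ : Measure X) (ν : Measure Y) : Prop :=
  ∃ f : msupport μ → msupport ν, LipschitzWith 1 f ∧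
    ∀ A : Set Y, MeasurableSet A →
      μ (Subtype.val '' ((fun x => (f x : Y)) ⁻¹' A)) = ν A

/-- The box metric. -/
def boxDist {X Y : Type*} [MetricSpace X] [MetricSpace Y]
    [MeasurableSpace X] [MeasurableSpace Y]
    (μ : Measure X) (ν : Measure Y) : ℝ≥0∞ :=
  ⨅ (S : Set (X × Y)) (_ : IsClosed S) (π : Measure (X × Y)) (_ : IsCoupling π μ ν),
    max (disBox S) (1 - π S)

/-- The unilateral box metric `□_≻(X,Y) = inf { ε ≥ 0 : X ≻_ε Y }`. -/
def ubox {X Y : Type*} [MetricSpace X] [MetricSpace Y]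
    [MeasurableSpace X] [MeasurableSpace Y]
    (μ : Measure X) (ν : Measure Y) : ℝ :=
  sInf {ε : ℝ | 0 ≤ ε ∧ LipDomE μ ν ε}

/-- The Prokhorov metric
`d_P(μ,ν) = inf { ε > 0 : μ(U_ε(A)) ≥ ν(A) − ε for every Borel A }`. -/
def prokDist {Y : Type*} [MetricSpace Y] [MeasurableSpace Y] (μ ν : Measure Y) : ℝ :=
  sInf {ε : ℝ | 0 < ε ∧ ∀ A : Set Y, MeasurableSet A →
    ν A ≤ μ (Metric.thickening ε A) + ENNReal.ofReal ε}

/-- `f : supp m_X → supp m_Y` is 1-Lipschitz up to an additive error `ε`. -/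
def LipUpTo {X Y : Type*} [MetricSpace X] [MetricSpace Y]
    [MeasurableSpace X] [MeasurableSpace Y]
    (μ : Measure X) (ν : Measure Y) (f : msupport μ → msupport ν) (ε : ℝ) : Prop :=
  ∃ X₀ : Set X, MeasurableSet X₀ ∧ X₀ ⊆ msupport μ ∧
    ENNReal.ofReal (1 - ε) ≤ μ X₀ ∧
    ∀ x x' : msupport μ, (x : X) ∈ X₀ → (x' : X) ∈ X₀ →
      dist (f x : Y) (f x' : Y) ≤ dist (x : X) (x' : X) + ε

/-- `X ≻^{KY}_ε Y`: there is a Borel measurable map `f : supp m_X → supp m_Y`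
which is 1-Lipschitz up to `ε` and satisfies `d_P(f_* m_X, m_Y) ≤ ε`. -/
def KYDom {X Y : Type*} [MetricSpace X] [MetricSpace Y]
    [MeasurableSpace X] [MeasurableSpace Y]
    (μ : Measure X) (ν : Measure Y) (ε : ℝ) : Prop :=
  ∃ f : msupport μ → msupport ν, Measurable f ∧ LipUpTo μ ν f ε ∧
    prokDist (Measure.map (fun x => (f x : Y)) (Measure.comap Subtype.val μ)) ν ≤ ε



set_option linter.unusedSectionVars false
set_option maxHeartbeats 1000000

lemma tight_aux {α : Type*} [MetricSpace α] [CompleteSpace α]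
    [TopologicalSpace.SeparableSpace α] [Nonempty α] [MeasurableSpace α]
    [OpensMeasurableSpace α] (P : Measure α) [IsFiniteMeasure P] {F : Set α} (hF : IsClosed F)
    {δ : ℝ≥0∞} (hδ : δ ≠ 0) : ∃ K, K ⊆ F ∧ IsCompact K ∧ P F ≤ P K + δ := by
  obtain ⟨δs, hδs, hδsum⟩ := ENNReal.exists_pos_sum_of_countable' hδ ℕ
  set D := TopologicalSpace.denseSeq α with hD
  have hDd : DenseRange D := TopologicalSpace.denseRange_denseSeq α
  set V : ℕ → ℕ → Set α := fun n m => ⋃ i ∈ Finset.range m, closedBall (D i) (1/(n+1)) with hV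
  have hVclosed : ∀ n m, IsClosed (V n m) := fun n m =>
    isClosed_biUnion_finset (fun i _ => isClosed_closedBall)
  have hVanti : ∀ n, Antitone (fun m => F \ V n m) := by
    intro n m m' hm
    apply diff_subset_diff_right
    exact Set.biUnion_subset_biUnion_left (Finset.range_subset_range.2 hm)
  have hVun : ∀ n, (⋂ m, F \ V n m) = ∅ := by
    intro n
    rw [← Set.diff_iUnion]
    have : (⋃ m, V n m) = univ := by
      apply Set.eq_univ_of_forall
      intro x
      obtain ⟨i, hi⟩ := (Metric.denseRange_iff.1 hDd) x (1/(n+1)) (by positivity)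
      exact Set.mem_iUnion.2 ⟨i+1, Set.mem_biUnion (Finset.mem_range.2 (Nat.lt_succ_self i))
        (mem_closedBall.2 hi.le)⟩
    simp [this]
  have key : ∀ n, ∃ m, P (F \ V n m) < δs n := by
    intro n
    have htend : Tendsto (fun m => P (F \ V n m)) atTop (𝓝 (P (⋂ m, F \ V n m))) :=
      tendsto_measure_iInter_atTop
        (fun m => (hF.measurableSet.diff (hVclosed n m).measurableSet).nullMeasurableSet)
        (hVanti n) ⟨0, measure_ne_top P _⟩
    rw [hVun n, measure_empty] at htend
    have := htend.eventually_lt_const (hδs n)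
    exact this.exists
  choose m hm using key
  refine ⟨F ∩ ⋂ n, V n (m n), inter_subset_left, ?_, ?_⟩
  · apply TotallyBounded.isCompact_of_isClosed
    · rw [Metric.totallyBounded_iff]
      intro ε hε
      obtain ⟨n, hn⟩ := exists_nat_one_div_lt hε
      refine ⟨D '' (Finset.range (m n) : Set ℕ), (Set.toFinite _).image _, ?_⟩
      intro x hx
      have hx2 : x ∈ V n (m n) := Set.mem_iInter.1 hx.2 n
      simp only [hV, Set.mem_iUnion] at hx2
      obtain ⟨i, hi, hxi⟩ := hx2
      exact Set.mem_biUnion (Set.mem_image_of_mem D (by simpa using hi))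
        (mem_ball.2 (lt_of_le_of_lt (mem_closedBall.1 hxi) hn))
    · exact hF.inter (isClosed_iInter fun n => hVclosed n (m n))
  · calc P F ≤ P (F ∩ (F ∩ ⋂ n, V n (m n))) + P (F \ (F ∩ ⋂ n, V n (m n))) :=
        by exact measure_le_inter_add_diff P F _
    _ ≤ P (F ∩ ⋂ n, V n (m n)) + δ := by
        gcongr
        · exact inter_subset_right
        · have hsub : F \ (F ∩ ⋂ n, V n (m n)) ⊆ ⋃ n, F \ V n (m n) := by
            intro x hx
            have : x ∈ F ∧ ¬ (x ∈ F ∧ x ∈ ⋂ n, V n (m n)) := hx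
            rcases this with ⟨hxF, hxn⟩
            have : ¬ x ∈ ⋂ n, V n (m n) := fun hc => hxn ⟨hxF, hc⟩
            rw [Set.mem_iInter] at this
            push_neg at this
            obtain ⟨n, hn⟩ := this
            exact Set.mem_iUnion.2 ⟨n, hxF, hn⟩
          calc P (F \ (F ∩ ⋂ n, V n (m n))) ≤ P (⋃ n, F \ V n (m n)) := measure_mono hsub
          _ ≤ ∑' n, P (F \ V n (m n)) := measure_iUnion_le _
          _ ≤ ∑' n, δs n := ENNReal.tsum_le_tsum (fun n => (hm n).le)
          _ ≤ δ := hδsum.le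

lemma msupport_isClosed {X : Type*} [TopologicalSpace X] [MeasurableSpace X] (μ : Measure X) :
    IsClosed (msupport μ) := by
  rw [← isOpen_compl_iff]
  rw [isOpen_iff_mem_nhds]
  intro x hx
  simp only [msupport, mem_compl_iff, mem_setOf_eq, not_forall] at hx
  obtain ⟨U, hU, hxU, hμU⟩ := hx
  push_neg at hμU
  have hμU0 : μ U = 0 := le_antisymm hμU zero_le
  refine Filter.mem_of_superset (hU.mem_nhds hxU) ?_
  intro y hy
  simp only [msupport, mem_compl_iff, mem_setOf_eq, not_forall]
  exact ⟨U, hU, hy, by simp [hμU0]⟩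

lemma msupport_compl_null {X : Type*} [TopologicalSpace X]
    [SecondCountableTopology X] [MeasurableSpace X] [OpensMeasurableSpace X]
    (μ : Measure X) : μ (msupport μ)ᶜ = 0 := by
  set B := {U ∈ TopologicalSpace.countableBasis X | μ U = 0} with hB
  have hcomp : (msupport μ)ᶜ = ⋃₀ B := by
    ext x
    simp only [msupport, mem_compl_iff, mem_setOf_eq, not_forall, mem_sUnion]
    constructor
    · rintro ⟨U, hU, hxU, hμU⟩
      push_neg at hμU
      have hμU0 : μ U = 0 := le_antisymm hμU zero_le
      obtain ⟨V, hV, hxV, hVU⟩ :=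
        (TopologicalSpace.isBasis_countableBasis X).exists_subset_of_mem_open hxU hU
      exact ⟨V, ⟨hV, le_antisymm (le_trans (measure_mono hVU) hμU0.le) zero_le⟩, hxV⟩
    · rintro ⟨V, ⟨hV, hμV⟩, hxV⟩
      exact ⟨V, (TopologicalSpace.isBasis_countableBasis X).isOpen hV, hxV, by simp [hμV]⟩
  rw [hcomp]
  exact measure_sUnion_null_iff ((TopologicalSpace.countable_countableBasis X).mono
    (sep_subset _ _)) |>.2 (fun U hU => hU.2)

lemma msupport_meas_one {X : Type*} [TopologicalSpace X]
    [SecondCountableTopology X] [MeasurableSpace X] [OpensMeasurableSpace X]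
    (μ : Measure X) [IsProbabilityMeasure μ] : μ (msupport μ) = 1 := by
  have := msupport_compl_null μ
  have h2 := measure_add_measure_compl (μ := μ) (msupport_isClosed μ).measurableSet
  rw [this, add_zero] at h2
  rw [h2]; exact measure_univ

lemma msupport_nonempty {X : Type*} [TopologicalSpace X]
    [SecondCountableTopology X] [MeasurableSpace X] [OpensMeasurableSpace X]
    (μ : Measure X) [IsProbabilityMeasure μ] : (msupport μ).Nonempty := by
  rw [Set.nonempty_iff_ne_empty]
  intro hc
  have := msupport_meas_one μ
  rw [hc] at this
  simp at this

namespace KYSel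

variable {X Y : Type*} [MetricSpace X] [MetricSpace Y]

/-- auxiliary: characterization of `Nat.sInf`. -/
lemma natSInf_eq_iff {s : Set ℕ} {m : ℕ} (hm : m ∈ s) :
    sInf s = m ↔ m ∈ s ∧ ∀ j < m, j ∉ s := by
  constructor
  · intro h
    exact ⟨h ▸ Nat.sInf_mem ⟨m, hm⟩, fun j hj => Nat.notMem_of_lt_sInf (show j < sInf s by rw [h]; exact hj)⟩
  · rintro ⟨hm', hj⟩
    refine le_antisymm (Nat.sInf_le hm') ?_
    by_contra hc
    push_neg at hc
    exact hj _ hc (Nat.sInf_mem ⟨m, hm⟩)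

/-- The greedy index choice. -/
def selPick (D : ℕ → Y) (n : ℕ) (T : Set Y) : ℕ :=
  sInf {i | (T ∩ closedBall (D i) ((1/2 : ℝ)^n)).Nonempty}

/-- The nested sets of the greedy selection scheme. -/
def selT (K : Set (X × Y)) (D : ℕ → Y) (x : X) : ℕ → Set Y
  | 0 => {y | (x, y) ∈ K}
  | n+1 => selT K D x n ∩ closedBall (D (selPick D n (selT K D x n))) ((1/2 : ℝ)^n)

/-- The chosen index at stage `n`. -/
def selIdx (K : Set (X × Y)) (D : ℕ → Y) (x : X) (n : ℕ) : ℕ :=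
  selPick D n (selT K D x n)

variable {K : Set (X × Y)} {D : ℕ → Y}

lemma selT_subset (x : X) : ∀ n, selT K D x n ⊆ {y | (x, y) ∈ K}
  | 0 => subset_rfl
  | n+1 => (Set.inter_subset_left).trans (selT_subset x n)

lemma selT_succ_subset (x : X) (n : ℕ) :
    selT K D x (n+1) ⊆ closedBall (D (selIdx K D x n)) ((1/2 : ℝ)^n) :=
  Set.inter_subset_right

lemma selT_nonempty (hD : DenseRange D) {x : X} (hx : ∃ y, (x, y) ∈ K) :
    ∀ n, (selT K D x n).Nonempty
  | 0 => hx
  | n+1 => by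
    obtain ⟨y, hy⟩ := selT_nonempty hD hx n
    obtain ⟨i, hi⟩ := (Metric.denseRange_iff.1 hD) y ((1/2 : ℝ)^n) (by positivity)
    have hmem : i ∈ {i | (selT K D x n ∩ closedBall (D i) ((1/2 : ℝ)^n)).Nonempty} :=
      ⟨y, hy, mem_closedBall.2 hi.le⟩
    have := Nat.sInf_mem ⟨i, hmem⟩
    exact this

lemma selT_eq (x : X) : ∀ n, selT K D x n =
    {y | (x, y) ∈ K} ∩ ⋂ (k : ℕ) (_ : k < n), closedBall (D (selIdx K D x k)) ((1/2 : ℝ)^k)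
  | 0 => by simp [selT]
  | n+1 => by
    rw [show selT K D x (n+1) = selT K D x n ∩
        closedBall (D (selIdx K D x n)) ((1/2 : ℝ)^n) from rfl, selT_eq x n]
    rw [Set.biInter_lt_succ]
    rw [Set.inter_assoc]

/-- the history event representation -/
lemma selT_eq_of_hist (x : X) (l : ℕ → ℕ) (n : ℕ) (hl : ∀ k < n, selIdx K D x k = l k) :
    selT K D x n = {y | (x, y) ∈ K} ∩ ⋂ (k : ℕ) (_ : k < n), closedBall (D (l k)) ((1/2 : ℝ)^k) := by
  rw [selT_eq x n]
  congr 1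
  apply Set.iInter_congr
  intro k
  apply Set.iInter_congr
  intro hk
  rw [hl k hk]

/-- The projected nonemptiness events. -/
def selE (K : Set (X × Y)) (C : Set Y) : Set X := Prod.fst '' (K ∩ (Set.univ ×ˢ C))

lemma mem_selE {C : Set Y} {x : X} : x ∈ selE K C ↔ ∃ y, (x, y) ∈ K ∧ y ∈ C := by
  constructor
  · rintro ⟨⟨a, b⟩, ⟨hab, -, hb⟩, rfl⟩
    exact ⟨b, hab, hb⟩
  · rintro ⟨y, hy, hyC⟩
    exact ⟨(x, y), ⟨hy, Set.mem_univ _, hyC⟩, rfl⟩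

lemma selE_measurable [MeasurableSpace X] [OpensMeasurableSpace X]
    (hK : IsCompact K) {C : Set Y} (hC : IsClosed C) : MeasurableSet (selE K C) :=
  (((hK.inter_right (isClosed_univ.prod hC)).image continuous_fst).isClosed).measurableSet

/-- the `n`-step constraint set determined by a history. -/
def selC (D : ℕ → Y) (l : ℕ → ℕ) (n : ℕ) : Set Y :=
  ⋂ (k : ℕ) (_ : k < n), closedBall (D (l k)) ((1/2 : ℝ)^k)

lemma selC_closed (l : ℕ → ℕ) (n : ℕ) : IsClosed (selC D l n) :=
  isClosed_iInter fun _ => isClosed_iInter fun _ => isClosed_closedBall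

/-- history events. -/
def selA (K : Set (X × Y)) (D : ℕ → Y) (n : ℕ) (l : ℕ → ℕ) : Set X :=
  {x | x ∈ Prod.fst '' K ∧ ∀ k < n, selIdx K D x k = l k}

lemma selA_measurable [MeasurableSpace X] [OpensMeasurableSpace X]
    (hK : IsCompact K) (hD : DenseRange D) (n : ℕ) (l : ℕ → ℕ) :
    MeasurableSet (selA K D n l) := by
  induction n with
  | zero =>
    have : selA K D 0 l = Prod.fst '' K := by
      ext x; simp [selA]
    rw [this]
    exact ((hK.image continuous_fst).isClosed).measurableSet
  | succ n ih =>
    have hrep : selA K D (n+1) l = selA K D n l ∩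
        (selE K (selC D l n ∩ closedBall (D (l n)) ((1/2 : ℝ)^n)) ∩
          ⋂ j ∈ Finset.range (l n), (selE K (selC D l n ∩ closedBall (D j) ((1/2 : ℝ)^n)))ᶜ) := by
      ext x
      simp only [Set.mem_inter_iff, Set.mem_iInter, Finset.mem_range, Set.mem_compl_iff, selA,
        Set.mem_setOf_eq]
      constructor
      · rintro ⟨hxP, hl⟩
        have hln : ∀ k < n, selIdx K D x k = l k := fun k hk => hl k (hk.trans (Nat.lt_succ_self n))
        have hT : selT K D x n = {y | (x, y) ∈ K} ∩ selC D l n := selT_eq_of_hist x l n hln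
        have hmemE : ∀ i : ℕ,
            (selT K D x n ∩ closedBall (D i) ((1/2 : ℝ)^n)).Nonempty ↔
              x ∈ selE K (selC D l n ∩ closedBall (D i) ((1/2 : ℝ)^n)) := by
          intro i
          rw [hT, mem_selE]
          constructor
          · rintro ⟨y, ⟨hy1, hy2⟩, hy3⟩; exact ⟨y, hy1, hy2, hy3⟩
          · rintro ⟨y, hy1, hy2, hy3⟩; exact ⟨y, ⟨hy1, hy2⟩, hy3⟩
        have hxK : ∃ y, (x, y) ∈ K := by
          obtain ⟨p, hp, rfl⟩ := hxP
          exact ⟨p.2, by simpa using hp⟩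
        have hne : (selT K D x n).Nonempty := selT_nonempty hD hxK n
        have hidx : selIdx K D x n = l n := hl n (Nat.lt_succ_self n)
        have hfind := (natSInf_eq_iff (m := l n)
          (s := {i | (selT K D x n ∩ closedBall (D i) ((1/2 : ℝ)^n)).Nonempty}) ?_).1 hidx
        · refine ⟨⟨hxP, hln⟩, (hmemE (l n)).1 hfind.1, fun j hj => ?_⟩
          intro hc
          exact hfind.2 j hj ((hmemE j).2 hc)
        · -- l n is in the set, from hidx: sInf = l n and set nonempty
          obtain ⟨y, hy⟩ := hne
          obtain ⟨i, hi⟩ := (Metric.denseRange_iff.1 hD) y ((1/2 : ℝ)^n) (by positivity)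
          have hmem : i ∈ {i | (selT K D x n ∩ closedBall (D i) ((1/2 : ℝ)^n)).Nonempty} :=
            ⟨y, hy, mem_closedBall.2 hi.le⟩
          have h2 : sInf {i | (selT K D x n ∩ closedBall (D i) ((1/2 : ℝ)^n)).Nonempty} = l n :=
            hidx
          have := Nat.sInf_mem ⟨i, hmem⟩
          rwa [h2] at this
      · rintro ⟨⟨hxP, hln⟩, hEpos, hEneg⟩
        have hT : selT K D x n = {y | (x, y) ∈ K} ∩ selC D l n := selT_eq_of_hist x l n hln
        have hmemE : ∀ i : ℕ,
            (selT K D x n ∩ closedBall (D i) ((1/2 : ℝ)^n)).Nonempty ↔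
              x ∈ selE K (selC D l n ∩ closedBall (D i) ((1/2 : ℝ)^n)) := by
          intro i
          rw [hT, mem_selE]
          constructor
          · rintro ⟨y, ⟨hy1, hy2⟩, hy3⟩; exact ⟨y, hy1, hy2, hy3⟩
          · rintro ⟨y, hy1, hy2, hy3⟩; exact ⟨y, ⟨hy1, hy2⟩, hy3⟩
        have hidx : selIdx K D x n = l n := by
          apply (natSInf_eq_iff ((hmemE (l n)).2 hEpos)).2
          exact ⟨(hmemE (l n)).2 hEpos, fun j hj hc => hEneg j hj ((hmemE j).1 hc)⟩
        refine ⟨hxP, fun k hk => ?_⟩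
        rcases Nat.lt_succ_iff_lt_or_eq.1 hk with hk' | rfl
        · exact hln k hk'
        · exact hidx
    rw [hrep]
    refine ih.inter ((selE_measurable hK (((selC_closed l n).inter isClosed_closedBall))).inter ?_)
    exact MeasurableSet.biInter (Finset.range (l n)).countable_toSet
      (fun j _ => (selE_measurable hK (((selC_closed l n).inter isClosed_closedBall))).compl)

lemma selIdx_event_measurable [MeasurableSpace X] [OpensMeasurableSpace X]
    (hK : IsCompact K) (hD : DenseRange D) (n i : ℕ) :
    MeasurableSet {x | x ∈ Prod.fst '' K ∧ selIdx K D x n = i} := by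
  have hrep : {x | x ∈ Prod.fst '' K ∧ selIdx K D x n = i} =
      ⋃ (v : Fin n → ℕ), selA K D (n+1) (fun k => if h : k < n then v ⟨k, h⟩ else i) := by
    ext x
    simp only [Set.mem_setOf_eq, Set.mem_iUnion, selA]
    constructor
    · rintro ⟨hxP, hidx⟩
      refine ⟨fun k => selIdx K D x k, hxP, fun k hk => ?_⟩
      rcases Nat.lt_succ_iff_lt_or_eq.1 hk with hk' | rfl
      · rw [dif_pos hk']
      · rw [dif_neg (lt_irrefl k), hidx]
    · rintro ⟨v, hxP, hl⟩
      refine ⟨hxP, ?_⟩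
      have := hl n (Nat.lt_succ_self n)
      rwa [dif_neg (lt_irrefl n)] at this
  rw [hrep]
  exact MeasurableSet.iUnion fun v => selA_measurable hK hD (n+1) _

/-- The key measurable selection lemma: a compact subset `K` of `X × Y` admits a Borel
measurable selection defined on `Prod.fst '' K`. -/
lemma exists_measurable_selection {X Y : Type*} [MetricSpace X] [MeasurableSpace X]
    [OpensMeasurableSpace X] [MetricSpace Y] [MeasurableSpace Y] [BorelSpace Y]
    [TopologicalSpace.SeparableSpace Y] [CompleteSpace Y] [Nonempty Y]
    {K : Set (X × Y)} (hK : IsCompact K) :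
    ∃ g : X → Y, Measurable g ∧ ∀ x ∈ Prod.fst '' K, (x, g x) ∈ K := by
  classical
  set D := TopologicalSpace.denseSeq Y with hDdef
  have hD : DenseRange D := TopologicalSpace.denseRange_denseSeq Y
  set P := Prod.fst '' K with hPdef
  have hPm : MeasurableSet P := ((hK.image continuous_fst).isClosed).measurableSet
  -- the approximating functions
  set J : ℕ → X → ℕ := fun n x => if x ∈ P then selIdx K D x n else 0 with hJdef
  have hJm : ∀ n, Measurable (J n) := by
    intro n
    apply measurable_to_countable'
    intro i
    have : J n ⁻¹' {i} = {x | x ∈ P ∧ selIdx K D x n = i} ∪ (if i = 0 then Pᶜ else ∅) := by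
      ext x
      by_cases hx : x ∈ P <;> by_cases hi : i = 0 <;>
        simp [hJdef, hx, hi, Set.mem_preimage, eq_comm]
    rw [this]
    refine (selIdx_event_measurable hK hD n i).union ?_
    by_cases hi : i = 0 <;> simp [hi, hPm.compl]
  set u : X → ℕ → Y := fun x n => D (J n x) with hudef
  have hum : ∀ n, Measurable (fun x => u x n) :=
    fun n => measurable_from_top.comp (hJm n)
  -- Cauchy on P
  have hxK : ∀ x ∈ P, ∃ y, (x, y) ∈ K := by
    rintro x ⟨p, hp, rfl⟩
    exact ⟨p.2, by simpa using hp⟩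
  have hdistu : ∀ x ∈ P, ∀ n, dist (u x n) (u x (n+1)) ≤ 2 * (1/2 : ℝ)^n := by
    intro x hx n
    obtain ⟨y, hy⟩ := selT_nonempty hD (hxK x hx) (n+2)
    have hy1 : y ∈ closedBall (D (selIdx K D x (n+1))) ((1/2 : ℝ)^(n+1)) :=
      selT_succ_subset x (n+1) hy
    have hy0 : y ∈ closedBall (D (selIdx K D x n)) ((1/2 : ℝ)^n) :=
      selT_succ_subset x n (Set.inter_subset_left hy)
    have : u x n = D (selIdx K D x n) := by simp [hudef, hJdef, hx]
    have h1 : u x (n+1) = D (selIdx K D x (n+1)) := by simp [hudef, hJdef, hx]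
    rw [this, h1]
    calc dist (D (selIdx K D x n)) (D (selIdx K D x (n+1)))
        ≤ dist (D (selIdx K D x n)) y + dist y (D (selIdx K D x (n+1))) := dist_triangle _ _ _
      _ ≤ (1/2 : ℝ)^n + (1/2 : ℝ)^(n+1) := by
          gcongr
          · rw [dist_comm]; exact mem_closedBall.1 hy0
          · exact mem_closedBall.1 hy1
      _ ≤ 2 * (1/2 : ℝ)^n := by rw [pow_succ]; ring_nf; nlinarith [pow_pos (by norm_num : (0:ℝ) < 1/2) n]
  have hcauchy : ∀ x, ∃ l, Tendsto (fun n => u x n) atTop (𝓝 l) := by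
    intro x
    by_cases hx : x ∈ P
    · apply cauchySeq_tendsto_of_complete
      exact cauchySeq_of_le_geometric (1/2 : ℝ) 2 (by norm_num) (fun n => hdistu x hx n)
    · refine ⟨D 0, ?_⟩
      have : (fun n => u x n) = fun _ => D 0 := by
        funext n; simp [hudef, hJdef, hx]
      rw [this]; exact tendsto_const_nhds
  set g : X → Y := fun x => limUnder atTop (fun n => u x n) with hgdef
  have htends : ∀ x, Tendsto (fun n => u x n) atTop (𝓝 (g x)) :=
    fun x => tendsto_nhds_limUnder (hcauchy x)
  refine ⟨g, ?_, ?_⟩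
  · exact measurable_of_tendsto_metrizable (fun n => hum n) (tendsto_pi_nhds.2 htends)
  · intro x hx
    -- choose z n ∈ selT (n+1)
    have hzsel : ∀ n, (selT K D x (n+1)).Nonempty := fun n => selT_nonempty hD (hxK x hx) (n+1)
    choose z hz using hzsel
    have hzK : ∀ n, (x, z n) ∈ K := fun n => selT_subset x (n+1) (hz n)
    have hzdist : ∀ n, dist (z n) (u x n) ≤ (1/2 : ℝ)^n := by
      intro n
      have := selT_succ_subset x n (hz n)
      have h2 : u x n = D (selIdx K D x n) := by simp [hudef, hJdef, hx]
      rw [h2]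
      exact mem_closedBall.1 this
    have hztend : Tendsto z atTop (𝓝 (g x)) := by
      rw [tendsto_iff_dist_tendsto_zero]
      apply squeeze_zero (fun n => dist_nonneg)
        (fun n => (dist_triangle (z n) (u x n) (g x)).trans
          (add_le_add_left (hzdist n) _))
      have h1 : Tendsto (fun n : ℕ => (1/2 : ℝ)^n) atTop (𝓝 0) :=
        tendsto_pow_atTop_nhds_zero_of_lt_one (by norm_num) (by norm_num)
      have h2 : Tendsto (fun n => dist (u x n) (g x)) atTop (𝓝 0) :=
        tendsto_iff_dist_tendsto_zero.1 (htends x)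
      simpa using h1.add h2
    have : Tendsto (fun n => (x, z n)) atTop (𝓝 (x, g x)) :=
      (tendsto_const_nhds : Tendsto (fun _ : ℕ => x) atTop (𝓝 x)).prodMk_nhds hztend
    exact hK.isClosed.mem_of_tendsto this (Filter.Eventually.of_forall hzK)

end KYSel



/-- If `X ≻_ε Y`, then `X ≻^KY_(2ε') Y` for every `ε' > ε`. -/
theorem kyDom_of_lipDomE {X Y : Type*} [MetricSpace X] [CompleteSpace X]
    [TopologicalSpace.SeparableSpace X] [MeasurableSpace X] [BorelSpace X]
    [MetricSpace Y] [CompleteSpace Y] [TopologicalSpace.SeparableSpace Y]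
    [MeasurableSpace Y] [BorelSpace Y]
    (μ : Measure X) (ν : Measure Y) [IsProbabilityMeasure μ] [IsProbabilityMeasure ν] (ε : ℝ) (hε : 0 ≤ ε)
    (h : LipDomE μ ν ε) :
    ∀ ε' : ℝ, ε < ε' → KYDom μ ν (2 * ε') := by
  
  intro ε' hε'
  have hε'pos : 0 < ε' := lt_of_le_of_lt hε hε'
  obtain ⟨y₀, hy₀⟩ := msupport_nonempty ν
  by_cases hhalf : (1 : ℝ) ≤ 2 * ε'
  · -- trivial case : `2 ε' ≥ 1`
    refine ⟨fun _ => ⟨y₀, hy₀⟩, measurable_const,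
      ⟨∅, MeasurableSet.empty, empty_subset _, ?_, ?_⟩, ?_⟩
    · rw [measure_empty]
      exact le_of_eq (ENNReal.ofReal_eq_zero.2 (by linarith))
    · intro x x' h1 _
      exact absurd h1 (Set.notMem_empty _)
    · apply csInf_le ⟨0, fun t ht => ht.1.le⟩
      refine ⟨by linarith, fun A hA => ?_⟩
      calc ν A ≤ 1 := prob_le_one
        _ = ENNReal.ofReal 1 := ENNReal.ofReal_one.symm
        _ ≤ ENNReal.ofReal (2 * ε') := ENNReal.ofReal_le_ofReal hhalf
        _ ≤ _ + ENNReal.ofReal (2 * ε') := le_add_self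
  · push_neg at hhalf
    obtain ⟨π, ⟨hπprob, hfst, hsnd⟩, S, hScl, hSdis, hSmeas⟩ := h
    haveI := hπprob
    haveI : Nonempty (X × Y) := by
      by_contra hne
      rw [not_nonempty_iff] at hne
      have h1 : π Set.univ = 1 := measure_univ
      rw [Set.univ_eq_empty_iff.2 hne, measure_empty] at h1
      exact zero_ne_one h1
    haveI : Nonempty Y := ⟨y₀⟩
    -- replace `S` by `S ∩ (univ ×ˢ supp ν)`
    set S' := S ∩ ((Set.univ : Set X) ×ˢ msupport ν) with hS'def
    have hS'cl : IsClosed S' := hScl.inter (isClosed_univ.prod (msupport_isClosed ν))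
    have hπcompl : π (Set.univ ×ˢ msupport ν)ᶜ = 0 := by
      have h2 : ((Set.univ : Set X) ×ˢ msupport ν)ᶜ = (Prod.snd : X × Y → Y) ⁻¹' (msupport ν)ᶜ := by
        ext p; simp [Set.mem_prod]
      rw [h2, ← Measure.map_apply measurable_snd
        (msupport_isClosed ν).measurableSet.compl, hsnd]
      exact msupport_compl_null ν
    have hπS' : ENNReal.ofReal (1 - ε) ≤ π S' :=
      le_trans hSmeas (le_of_eq (measure_inter_conull hπcompl).symm)
    -- a compact subset of `S'` of almost full measure
    have hδ : ENNReal.ofReal (ε' - ε) ≠ 0 :=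
      (ENNReal.ofReal_pos.2 (by linarith)).ne'
    obtain ⟨K, hKS', hKcomp, hKle⟩ := tight_aux π hS'cl hδ
    have hπK : ENNReal.ofReal (1 - ε') ≤ π K := by
      have h3 : ENNReal.ofReal (1 - ε') + ENNReal.ofReal (ε' - ε) ≤ π K + ENNReal.ofReal (ε' - ε) := by
        have h4 : ENNReal.ofReal (1 - ε') + ENNReal.ofReal (ε' - ε) = ENNReal.ofReal (1 - ε) := by
          rw [← ENNReal.ofReal_add (by linarith) (by linarith)]
          ring_nf
        rw [h4]
        exact le_trans hπS' hKle
      exact (ENNReal.add_le_add_iff_right ENNReal.ofReal_ne_top).1 h3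
    have hKsub : K ⊆ S := hKS'.trans Set.inter_subset_left
    -- the measurable selection
    obtain ⟨g, hg, hgK⟩ := KYSel.exists_measurable_selection hKcomp
    set P := Prod.fst '' K with hPdef
    have hPcl : IsClosed P := (hKcomp.image continuous_fst).isClosed
    have hPm : MeasurableSet P := hPcl.measurableSet
    classical
    set F : X → Y := fun x => if x ∈ P then g x else y₀ with hFdef
    have hFm : Measurable F := Measurable.ite hPm hg measurable_const
    have hFsupp : ∀ x : X, F x ∈ msupport ν := by
      intro x
      by_cases hx : x ∈ P
      · simp only [hFdef, if_pos hx]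
        exact (hKS' (hgK x hx)).2.2
      · simp only [hFdef, if_neg hx]
        exact hy₀
    set f : msupport μ → msupport ν := fun x => ⟨F (x : X), hFsupp _⟩ with hfdef
    have hfm : Measurable f :=
      Measurable.subtype_mk (hFm.comp measurable_subtype_coe)
    -- basic distortion estimate
    have hdis : ∀ p ∈ S, ∀ q ∈ S, dist p.2 q.2 - dist p.1 q.1 ≤ ε := by
      intro p hp q hq
      have h1 : ENNReal.ofReal (dist p.2 q.2 - dist p.1 q.1) ≤ disSucc S := by
        calc ENNReal.ofReal (dist p.2 q.2 - dist p.1 q.1)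
            ≤ ⨆ q' ∈ S, ENNReal.ofReal (dist p.2 q'.2 - dist p.1 q'.1) :=
              le_iSup₂ (f := fun q' (_ : q' ∈ S) =>
                ENNReal.ofReal (dist p.2 q'.2 - dist p.1 q'.1)) q hq
          _ ≤ disSucc S :=
              le_iSup₂ (f := fun p' (_ : p' ∈ S) =>
                ⨆ q' ∈ S, ENNReal.ofReal (dist p'.2 q'.2 - dist p'.1 q'.1)) p hp
      have h1' := le_trans h1 hSdis
      rwa [ENNReal.ofReal_le_ofReal_iff hε] at h1'
    -- the Lipschitz up to additive error property
    set X₀ := P ∩ msupport μ with hX₀def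
    have hX₀m : MeasurableSet X₀ := hPm.inter (msupport_isClosed μ).measurableSet
    have hμX₀ : μ X₀ = μ P := measure_inter_conull (msupport_compl_null μ)
    have hμP : ENNReal.ofReal (1 - ε') ≤ μ P := by
      have h5 : K ⊆ Prod.fst ⁻¹' P := fun z hz => ⟨z, hz, rfl⟩
      have h6 : μ P = π (Prod.fst ⁻¹' P) := by
        rw [← hfst, Measure.map_apply measurable_fst hPm]
      calc ENNReal.ofReal (1 - ε') ≤ π K := hπK
        _ ≤ π (Prod.fst ⁻¹' P) := measure_mono h5
        _ = μ P := h6.symm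
    have hlip : LipUpTo μ ν f (2 * ε') := by
      refine ⟨X₀, hX₀m, Set.inter_subset_right, ?_, ?_⟩
      · rw [hμX₀]
        exact le_trans (ENNReal.ofReal_le_ofReal (by linarith)) hμP
      · intro x x' hx hx'
        have hfx : (f x : Y) = g (x : X) := by
          simp only [hfdef, hFdef, if_pos hx.1]
        have hfx' : (f x' : Y) = g (x' : X) := by
          simp only [hfdef, hFdef, if_pos hx'.1]
        rw [hfx, hfx']
        have h7 := hdis _ (hKsub (hgK _ hx.1)) _ (hKsub (hgK _ hx'.1))
        simp only at h7
        linarith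
    -- the Prokhorov estimate
    set ρ := Measure.map (fun x => (f x : Y)) (Measure.comap Subtype.val μ) with hρdef
    have hρap : ∀ t : Set Y, MeasurableSet t →
        ρ t = μ {x | x ∈ msupport μ ∧ F x ∈ t} := by
      intro t ht
      have hemb : MeasurableEmbedding (Subtype.val : msupport μ → X) :=
        MeasurableEmbedding.subtype_coe (msupport_isClosed μ).measurableSet
      rw [hρdef, Measure.map_apply
        (show Measurable fun x : msupport μ => (f x : Y) from measurable_subtype_coe.comp hfm) ht,
        hemb.comap_apply]
      congr 1
      ext x
      constructor
      · rintro ⟨⟨x', hx'⟩, hp, rfl⟩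
        exact ⟨hx', hp⟩
      · rintro ⟨h1, h2⟩
        exact ⟨⟨x, h1⟩, h2, rfl⟩
    have hπside : π ((msupport μ) ×ˢ (Set.univ : Set Y))ᶜ = 0 := by
      have h2 : ((msupport μ) ×ˢ (Set.univ : Set Y))ᶜ = Prod.fst ⁻¹' (msupport μ)ᶜ := by
        ext p; simp [Set.mem_prod]
      rw [h2, ← Measure.map_apply measurable_fst
        (msupport_isClosed μ).measurableSet.compl, hfst]
      exact msupport_compl_null μ
    have hcompl : π Kᶜ ≤ ENNReal.ofReal ε' := by
      rw [measure_compl hKcomp.measurableSet (measure_ne_top π K), measure_univ,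
        tsub_le_iff_right]
      calc (1 : ℝ≥0∞) = ENNReal.ofReal (1 - ε') + ENNReal.ofReal ε' := by
            rw [← ENNReal.ofReal_add (by linarith) (by linarith)]
            norm_num
        _ ≤ π K + ENNReal.ofReal ε' := add_le_add_left hπK _
        _ = ENNReal.ofReal ε' + π K := add_comm _ _
    have hmem : (2 * ε') ∈ {t : ℝ | 0 < t ∧ ∀ A : Set Y, MeasurableSet A →
        ν A ≤ ρ (Metric.thickening t A) + ENNReal.ofReal t} := by
      refine ⟨by linarith, fun A hA => ?_⟩
      set T := {x | x ∈ msupport μ ∧ F x ∈ Metric.thickening (2 * ε') A} with hTdef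
      have hTm : MeasurableSet T := by
        have : T = msupport μ ∩ F ⁻¹' (Metric.thickening (2 * ε') A) := rfl
        rw [this]
        exact (msupport_isClosed μ).measurableSet.inter
          (hFm isOpen_thickening.measurableSet)
      have key : Prod.snd ⁻¹' A ∩ K ∩ ((msupport μ) ×ˢ (Set.univ : Set Y)) ⊆
          Prod.fst ⁻¹' T := by
        rintro ⟨x, y⟩ ⟨⟨hyA, hKmem⟩, hxsupp, -⟩
        have hxP : x ∈ P := ⟨(x, y), hKmem, rfl⟩
        have hgx := hgK x hxP
        have h6 := hdis _ (hKsub hgx) _ (hKsub hKmem)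
        simp only [dist_self, sub_zero] at h6
        have h7 : dist (g x) y ≤ ε := by simpa using h6
        have hFth : F x ∈ Metric.thickening (2 * ε') A := by
          rw [Metric.mem_thickening_iff]
          refine ⟨y, hyA, ?_⟩
          simp only [hFdef, if_pos hxP]
          linarith
        exact ⟨hxsupp, hFth⟩
      have hμT : π (Prod.fst ⁻¹' T) = μ T := by
        rw [← hfst, Measure.map_apply measurable_fst hTm]
      calc ν A = π (Prod.snd ⁻¹' A) := by
            rw [← hsnd, Measure.map_apply measurable_snd hA]
        _ ≤ π (Prod.snd ⁻¹' A ∩ K) + π (Prod.snd ⁻¹' A \ K) :=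
            measure_le_inter_add_diff π _ _
        _ ≤ π (Prod.snd ⁻¹' A ∩ K) + ENNReal.ofReal ε' := by
            exact add_le_add_right (le_trans (measure_mono (fun z hz => hz.2)) hcompl) _
        _ = π (Prod.snd ⁻¹' A ∩ K ∩ ((msupport μ) ×ˢ (Set.univ : Set Y))) +
              ENNReal.ofReal ε' := by
            rw [measure_inter_conull hπside]
        _ ≤ π (Prod.fst ⁻¹' T) + ENNReal.ofReal ε' := by
            exact add_le_add_left (measure_mono key) _
        _ = μ T + ENNReal.ofReal ε' := by rw [hμT]
        _ = ρ (Metric.thickening (2 * ε') A) + ENNReal.ofReal ε' := by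
            rw [hρap _ isOpen_thickening.measurableSet]
        _ ≤ ρ (Metric.thickening (2 * ε') A) + ENNReal.ofReal (2 * ε') := by
            exact add_le_add_right (ENNReal.ofReal_le_ofReal (by linarith)) _
    exact ⟨f, hfm, hlip, csInf_le ⟨0, fun t ht => ht.1.le⟩ hmem⟩
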